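/- arXiv:2508.14991 — 2 statements merged into one kernel-verified Lean document; each statement's English description precedes it below -/
import Mathlib

section
/- Let $M = \mathbb{C}^{d\times d}$ with delta-form $\delta(x) = d\,\mathrm{tr}(x\sigma)$, inner product $\langle x,y\rangle = \delta(y^*x)$, and let $\{t_j\}$ be any orthonormal basis of $M$ with respect to this inner product. Then for every $x \in M$, the adjoint of multiplication satisfies $m^*(x) = \sum_j t_j \otimes t_j^* x = \sum_j x t_j \otimes t_j^*$. -/
open Matrix ComplexOrder
open scoped TensorProduct

/-- The delta-form `δ(x) = d · tr(x σ)` as a linear functional on `ℂ^{d×d}`. -/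
noncomputable def deltaL (d : ℕ) (σ : Matrix (Fin d) (Fin d) ℂ) :
    Matrix (Fin d) (Fin d) ℂ →ₗ[ℂ] ℂ :=
  (d : ℂ) • ((Matrix.traceLinearMap (Fin d) ℂ ℂ).comp (LinearMap.mulRight ℂ σ))

/-- The linear functional `x ↦ δ(c^* x) = ⟨x, c⟩`. -/
noncomputable def innerFun (d : ℕ) (σ c : Matrix (Fin d) (Fin d) ℂ) :
    Matrix (Fin d) (Fin d) ℂ →ₗ[ℂ] ℂ :=
  (deltaL d σ).comp (LinearMap.mulLeft ℂ c.conjTranspose)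

/-- The linear functional on `M ⊗ M` given by pairing with the pure tensor
`c ⊗ e` for the product inner product: `u ↦ ⟨u, c ⊗ e⟩`. -/
noncomputable def innerTensorFun (d : ℕ) (σ c e : Matrix (Fin d) (Fin d) ℂ) :
    Matrix (Fin d) (Fin d) ℂ ⊗[ℂ] Matrix (Fin d) (Fin d) ℂ →ₗ[ℂ] ℂ :=
  TensorProduct.lift ((LinearMap.mul ℂ ℂ).compl₁₂ (innerFun d σ c) (innerFun d σ e))

lemma deltaL_apply (d : ℕ) (σ y : Matrix (Fin d) (Fin d) ℂ) :
    deltaL d σ y = (d : ℂ) * (y * σ).trace := by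
  simp [deltaL]

lemma innerFun_apply (d : ℕ) (σ c x : Matrix (Fin d) (Fin d) ℂ) :
    innerFun d σ c x = deltaL d σ (c.conjTranspose * x) := rfl

lemma innerTensorFun_tmul (d : ℕ) (σ c e a b : Matrix (Fin d) (Fin d) ℂ) :
    innerTensorFun d σ c e (a ⊗ₜ[ℂ] b) = innerFun d σ c a * innerFun d σ e b := rfl

/-- with `{t j}` any orthonormal basis of `M = ℂ^{d×d}` for the
delta-form inner product `⟨x,y⟩ = δ(y^* x)` and `ms` the adjoint of the
multiplication map, one has `m^*(x) = ∑ j, t j ⊗ (t j)^* x = ∑ j, x t j ⊗ (t j)^*`. -/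
theorem stmt2 (d : ℕ) (hd : 0 < d) (σ : Matrix (Fin d) (Fin d) ℂ)
    (hσ : σ.PosDef) (htr : (σ⁻¹).trace = (d : ℂ))
    (κ : Type) [Fintype κ] [DecidableEq κ] (t : κ → Matrix (Fin d) (Fin d) ℂ)
    (ht_on : ∀ p q : κ, deltaL d σ ((t q).conjTranspose * t p) = if p = q then 1 else 0)
    (ht_span : Submodule.span ℂ (Set.range t) = ⊤)
    (ms : Matrix (Fin d) (Fin d) ℂ →ₗ[ℂ]
      Matrix (Fin d) (Fin d) ℂ ⊗[ℂ] Matrix (Fin d) (Fin d) ℂ)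
    (hadj : ∀ x c e : Matrix (Fin d) (Fin d) ℂ,
      innerTensorFun d σ c e (ms x) = innerFun d σ (c * e) x) :
    ∀ x : Matrix (Fin d) (Fin d) ℂ,
      ms x = ∑ j : κ, t j ⊗ₜ[ℂ] ((t j).conjTranspose * x) ∧
      ms x = ∑ j : κ, (x * t j) ⊗ₜ[ℂ] (t j).conjTranspose := by
  have hσinv : σ⁻¹ * σ = 1 := Matrix.nonsing_inv_mul σ hσ.det_pos.ne'.isUnit
  -- expansion of any element in the orthonormal basis
  have expand : ∀ y : Matrix (Fin d) (Fin d) ℂ,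
      y = ∑ k : κ, deltaL d σ ((t k).conjTranspose * y) • t k := by
    intro y
    have hy : y ∈ Submodule.span ℂ (Set.range t) := ht_span ▸ Submodule.mem_top
    obtain ⟨a, ha⟩ := (Submodule.mem_span_range_iff_exists_fun ℂ).1 hy
    rw [← ha]
    refine Finset.sum_congr rfl fun k _ => ?_
    congr 1
    rw [Matrix.mul_sum, map_sum]
    simp_rw [Matrix.mul_smul, _root_.map_smul, ht_on, smul_eq_mul]
    simp
  have key : ∀ j : κ, ∑ k : κ, deltaL d σ ((t j).conjTranspose * (t k).conjTranspose) • t k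
      = σ * (t j).conjTranspose * σ⁻¹ := by
    intro j
    conv_rhs => rw [expand (σ * (t j).conjTranspose * σ⁻¹)]
    refine Finset.sum_congr rfl fun k _ => ?_
    congr 1
    simp only [deltaL_apply]
    congr 1
    rw [show (t k).conjTranspose * (σ * (t j).conjTranspose * σ⁻¹) * σ
        = (t k).conjTranspose * (σ * (t j).conjTranspose) * (σ⁻¹ * σ) by
      noncomm_ring]
    rw [hσinv, mul_one, Matrix.trace_mul_cycle, ← mul_assoc, Matrix.trace_mul_comm, mul_assoc]
  have expandT : ∀ u : Matrix (Fin d) (Fin d) ℂ ⊗[ℂ] Matrix (Fin d) (Fin d) ℂ,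
      u = ∑ i : κ, ∑ j : κ, innerTensorFun d σ (t i) (t j) u • (t i ⊗ₜ[ℂ] t j) := by
    intro u
    induction u using TensorProduct.induction_on with
    | zero => simp
    | tmul a b =>
      conv_lhs => rw [expand a, expand b]
      rw [TensorProduct.sum_tmul]
      refine Finset.sum_congr rfl fun i _ => ?_
      rw [TensorProduct.tmul_sum]
      refine Finset.sum_congr rfl fun j _ => ?_
      rw [innerTensorFun_tmul, innerFun_apply, innerFun_apply,
        TensorProduct.tmul_smul, TensorProduct.smul_tmul', smul_smul, mul_comm,
        ← TensorProduct.smul_tmul']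
    | add u v hu hv =>
      conv_lhs => rw [hu, hv]
      simp only [map_add, add_smul, Finset.sum_add_distrib]
  intro x
  constructor
  · conv_lhs => rw [expandT (ms x)]
    conv_rhs => rw [expandT (∑ j : κ, t j ⊗ₜ[ℂ] ((t j).conjTranspose * x))]
    refine Finset.sum_congr rfl fun i _ => Finset.sum_congr rfl fun j _ => ?_
    congr 1
    rw [hadj, map_sum]
    simp only [innerTensorFun_tmul, innerFun_apply, Matrix.conjTranspose_mul, ht_on]
    rw [Finset.sum_eq_single i]
    · simp [mul_assoc]
    · intro k _ hk
      simp [ht_on, hk]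
    · simp
  · conv_lhs => rw [expandT (ms x)]
    conv_rhs => rw [expandT (∑ j : κ, (x * t j) ⊗ₜ[ℂ] (t j).conjTranspose)]
    refine Finset.sum_congr rfl fun i _ => Finset.sum_congr rfl fun j _ => ?_
    congr 1
    rw [hadj, map_sum]
    simp only [innerTensorFun_tmul, innerFun_apply]
    have : ∑ k : κ, deltaL d σ ((t i).conjTranspose * (x * t k)) *
        deltaL d σ ((t j).conjTranspose * (t k).conjTranspose)
        = deltaL d σ ((t i).conjTranspose * (x * (σ * (t j).conjTranspose * σ⁻¹))) := by
      rw [← key j]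
      rw [Matrix.mul_sum, Matrix.mul_sum, map_sum]
      refine Finset.sum_congr rfl fun k _ => ?_
      rw [Matrix.mul_smul, Matrix.mul_smul, _root_.map_smul, smul_eq_mul, mul_comm]
    rw [this]
    simp only [deltaL_apply, Matrix.conjTranspose_mul]
    congr 1
    rw [show (t i).conjTranspose * (x * (σ * (t j).conjTranspose * σ⁻¹)) * σ
        = (t i).conjTranspose * (x * (σ * (t j).conjTranspose)) * (σ⁻¹ * σ) by
      noncomm_ring]
    rw [hσinv, mul_one, ← Matrix.trace_mul_cycle,
      show x * σ * ((t j)ᴴ * (t i)ᴴ) = (x * (σ * (t j)ᴴ)) * (t i)ᴴ by noncomm_ring,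
      Matrix.trace_mul_comm]
end

section
/- Let $M = \bigoplus_{i \in I} \mathbb{C}^{d_i\times d_i}$ be a finite direct sum of matrix algebras with delta-form $\delta$ given by $\sigma$. Define the conditional expectation $\mathfrak{e}: M \to Z(M)$ by $\mathfrak{e}(x) = \sum_{y \in B} y x y^*$, where $B$ is any orthonormal basis of $M$ with respect to $\langle x,y\rangle = \delta(y^*x)$. Then for $x \in M_i$ one has $\mathfrak{e}(x) = \frac{\mathrm{tr}(x\sigma_i^{-1})}{d_i} 1_i$; in particular $\mathfrak{e}$ is independent of the choice of orthonormal basis. -/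
open Matrix ComplexOrder

/-- The delta-form on a finite direct sum of matrix algebras, determined by a
block-diagonal `σ`: `δ(x) = ∑ i, d i · tr(x i * σ i)`. -/
noncomputable def deltaFormPi {ι : Type} [Fintype ι] (d : ι → ℕ)
    (σ : ∀ i, Matrix (Fin (d i)) (Fin (d i)) ℂ)
    (x : ∀ i, Matrix (Fin (d i)) (Fin (d i)) ℂ) : ℂ :=
  ∑ i, (d i : ℂ) * (x i * σ i).trace

namespace Stmt6Aux

variable {ι : Type} [Fintype ι] [DecidableEq ι] {d : ι → ℕ}
  (σ : ∀ i, Matrix (Fin (d i)) (Fin (d i)) ℂ)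

/-- `deltaFormPi` as a linear map. -/
noncomputable def deltaL : (∀ i, Matrix (Fin (d i)) (Fin (d i)) ℂ) →ₗ[ℂ] ℂ where
  toFun := deltaFormPi d σ
  map_add' x y := by
    simp [deltaFormPi, Matrix.add_mul, Finset.sum_add_distrib, mul_add]
  map_smul' c x := by
    simp only [deltaFormPi, Pi.smul_apply, Matrix.smul_mul, Matrix.trace_smul, smul_eq_mul,
      RingHom.id_apply, Finset.mul_sum]
    exact Finset.sum_congr rfl fun _ _ => by ring

/-- The sesquilinear form `⟨u, v⟩ = δ(v^* u)` as a linear map in `u`. -/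
noncomputable def ipL (v : ∀ i, Matrix (Fin (d i)) (Fin (d i)) ℂ) :
    (∀ i, Matrix (Fin (d i)) (Fin (d i)) ℂ) →ₗ[ℂ] ℂ :=
  (deltaL σ).comp (LinearMap.mulLeft ℂ (star v))

lemma ipL_apply (v u : ∀ i, Matrix (Fin (d i)) (Fin (d i)) ℂ) :
    ipL σ v u = deltaFormPi d σ (star v * u) := rfl

lemma delta_star (hσ : ∀ i, (σ i).IsHermitian) (x : ∀ i, Matrix (Fin (d i)) (Fin (d i)) ℂ) :
    deltaFormPi d σ (star x) = starRingEnd ℂ (deltaFormPi d σ x) := by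
  simp only [deltaFormPi, map_sum, _root_.map_mul]
  refine Finset.sum_congr rfl fun j _ => ?_
  have h1 : (star x j * σ j) = ((σ j)ᴴ * x j)ᴴ := by
    rw [Matrix.conjTranspose_mul, Matrix.conjTranspose_conjTranspose]
    rfl
  rw [h1, Matrix.trace_conjTranspose, (hσ j).eq, Matrix.trace_mul_comm]
  simp

lemma star_ipL (hσ : ∀ i, (σ i).IsHermitian)
    (u v : ∀ i, Matrix (Fin (d i)) (Fin (d i)) ℂ) :
    starRingEnd ℂ (ipL σ v u) = ipL σ u v := by
  rw [ipL_apply, ipL_apply, ← delta_star σ hσ]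
  congr 1
  simp [StarMul.star_mul]

variable {κ : Type} [Fintype κ] [DecidableEq κ]
  {b : κ → ∀ i, Matrix (Fin (d i)) (Fin (d i)) ℂ}

lemma recon (hb_on : ∀ p q : κ, deltaFormPi d σ (star (b q) * b p) = if p = q then 1 else 0)
    (hb_span : Submodule.span ℂ (Set.range b) = ⊤)
    (u : ∀ i, Matrix (Fin (d i)) (Fin (d i)) ℂ) :
    ∑ p, ipL σ (b p) u • b p = u := by
  have hu : u ∈ Submodule.span ℂ (Set.range b) := hb_span ▸ Submodule.mem_top
  induction hu using Submodule.span_induction with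
  | mem x hx =>
    obtain ⟨q, rfl⟩ := hx
    have : ∀ p, ipL σ (b p) (b q) = if q = p then 1 else 0 := fun p => hb_on q p
    simp only [this, ite_smul, one_smul, zero_smul]
    simp
  | zero => simp
  | add x y hx hy ihx ihy =>
    simp only [map_add, add_smul, Finset.sum_add_distrib, ihx, ihy]
  | smul c x hx ih =>
    simp only [_root_.map_smul, smul_eq_mul, mul_smul]
    rw [← Finset.smul_sum, ih]

lemma parseval (hb_on : ∀ p q : κ, deltaFormPi d σ (star (b q) * b p) = if p = q then 1 else 0)
    (hb_span : Submodule.span ℂ (Set.range b) = ⊤)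
    (y z : ∀ i, Matrix (Fin (d i)) (Fin (d i)) ℂ) :
    ∑ p, ipL σ y (b p) * ipL σ (b p) z = ipL σ y z := by
  conv_rhs => rw [← recon σ hb_on hb_span z]
  rw [map_sum]
  exact Finset.sum_congr rfl fun p _ => by rw [_root_.map_smul, smul_eq_mul]; ring

lemma swap (hσ : ∀ i, (σ i).IsHermitian)
    (hb_on : ∀ p q : κ, deltaFormPi d σ (star (b q) * b p) = if p = q then 1 else 0)
    (hb_span : Submodule.span ℂ (Set.range b) = ⊤)
    (a x : ∀ i, Matrix (Fin (d i)) (Fin (d i)) ℂ) :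
    ∑ p, a * (b p * x * star (b p)) = ∑ p, (b p * x * star (b p)) * a := by
  have key : ∀ p q, ipL σ (b q) (a * b p) = ipL σ (star a * b q) (b p) := by
    intro p q
    rw [ipL_apply, ipL_apply]
    congr 1
    rw [StarMul.star_mul, star_star, mul_assoc]
  calc ∑ p, a * (b p * x * star (b p))
      = ∑ p, (a * b p) * (x * star (b p)) := by
        refine Finset.sum_congr rfl fun p _ => ?_
        noncomm_ring
    _ = ∑ p, (∑ q, ipL σ (b q) (a * b p) • b q) * (x * star (b p)) := by
        refine Finset.sum_congr rfl fun p _ => ?_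
        rw [recon σ hb_on hb_span (a * b p)]
    _ = ∑ p, ∑ q, ipL σ (star a * b q) (b p) • (b q * (x * star (b p))) := by
        refine Finset.sum_congr rfl fun p _ => ?_
        rw [Finset.sum_mul]
        refine Finset.sum_congr rfl fun q _ => ?_
        rw [key, smul_mul_assoc]
    _ = ∑ q, ∑ p, ipL σ (star a * b q) (b p) • (b q * (x * star (b p))) :=
        Finset.sum_comm
    _ = ∑ q, b q * (x * (∑ p, ipL σ (star a * b q) (b p) • star (b p))) := by
        refine Finset.sum_congr rfl fun q _ => ?_
        simp [Finset.mul_sum, mul_smul_comm]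
    _ = ∑ q, (b q * x * star (b q)) * a := by
        refine Finset.sum_congr rfl fun q _ => ?_
        have h2 : ∑ p, ipL σ (star a * b q) (b p) • star (b p)
            = star (∑ p, ipL σ (b p) (star a * b q) • b p) := by
          rw [star_sum]
          refine Finset.sum_congr rfl fun p _ => ?_
          rw [star_smul]
          congr 1
          exact (star_ipL σ hσ (star a * b q) (b p)).symm
        rw [h2, recon σ hb_on hb_span, StarMul.star_mul, star_star]
        noncomm_ring

lemma delta_smul (c : ℂ) (x : ∀ i, Matrix (Fin (d i)) (Fin (d i)) ℂ) :
    deltaFormPi d σ (c • x) = c * deltaFormPi d σ x := by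
  exact (deltaL σ).map_smul c x

lemma mul_single {i : ι} (w : ∀ j, Matrix (Fin (d j)) (Fin (d j)) ℂ)
    (A : Matrix (Fin (d i)) (Fin (d i)) ℂ) :
    w * Pi.single i A = Pi.single i (w i * A) := by
  funext j
  rcases eq_or_ne j i with rfl | h
  · simp [Pi.mul_apply]
  · simp [Pi.mul_apply, Pi.single_eq_of_ne h]

lemma single_mul {i : ι} (A : Matrix (Fin (d i)) (Fin (d i)) ℂ)
    (w : ∀ j, Matrix (Fin (d j)) (Fin (d j)) ℂ) :
    Pi.single i A * w = Pi.single i (A * w i) := by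
  funext j
  rcases eq_or_ne j i with rfl | h
  · simp [Pi.mul_apply]
  · simp [Pi.mul_apply, Pi.single_eq_of_ne h]

lemma delta_single {i : ι} (A : Matrix (Fin (d i)) (Fin (d i)) ℂ) :
    deltaFormPi d σ (Pi.single i A) = (d i : ℂ) * (A * σ i).trace := by
  rw [deltaFormPi, Finset.sum_eq_single i]
  · simp
  · intro j _ hj
    simp [Pi.single_eq_of_ne hj]
  · intro h
    exact absurd (Finset.mem_univ i) h

lemma trace_sbm_mul {n : ℕ} (k l : Fin n) (M : Matrix (Fin n) (Fin n) ℂ) :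
    (Matrix.single k l (1 : ℂ) * M).trace = M l k := by
  rw [Matrix.trace, Finset.sum_eq_single k]
  · simp
  · intro a _ ha
    simp [Matrix.diag, Matrix.single_mul_apply_of_ne _ _ _ _ _ ha]
  · intro h
    exact absurd (Finset.mem_univ k) h

lemma sbm_conjT {n : ℕ} (k l : Fin n) :
    (Matrix.single k l (1 : ℂ))ᴴ = Matrix.single l k 1 := by
  ext a c
  simp only [Matrix.conjTranspose_apply, Matrix.single, Matrix.of_apply]
  by_cases h1 : k = c <;> by_cases h2 : l = a <;> simp [h1, h2] <;> aesop

end Stmt6Aux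


set_option maxHeartbeats 1000000 in
/-- for any orthonormal basis `b` of `M = ⨁ i, ℂ^{d i × d i}` with
respect to `⟨x,y⟩ = δ(y^* x)`, and any `x = Pi.single i m` supported in the
`i`-th block, the conditional expectation `𝔢(x) = ∑_{y ∈ B} y x y^*` equals
`(tr(m σ i⁻¹)/d i) 1_i`; in particular it does not depend on the basis. -/
theorem stmt6 {ι : Type} [Fintype ι] [DecidableEq ι] (d : ι → ℕ) (hd : ∀ i, 0 < d i)
    (σ : ∀ i, Matrix (Fin (d i)) (Fin (d i)) ℂ)
    (hσ : ∀ i, (σ i).PosDef) (htr : ∀ i, ((σ i)⁻¹).trace = (d i : ℂ))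
    (κ : Type) [Fintype κ] [DecidableEq κ]
    (b : κ → ∀ i, Matrix (Fin (d i)) (Fin (d i)) ℂ)
    (hb_on : ∀ p q : κ, deltaFormPi d σ (star (b q) * b p) = if p = q then 1 else 0)
    (hb_span : Submodule.span ℂ (Set.range b) = ⊤)
    (i : ι) (m : Matrix (Fin (d i)) (Fin (d i)) ℂ) :
    (∑ p : κ, b p * Pi.single i m * star (b p)) =
      ((m * (σ i)⁻¹).trace / (d i : ℂ)) •
        (Pi.single i (1 : Matrix (Fin (d i)) (Fin (d i)) ℂ) :
          ∀ j, Matrix (Fin (d j)) (Fin (d j)) ℂ) := by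
  classical
  have hherm : ∀ j, (σ j).IsHermitian := fun j => (hσ j).1
  have hdet : IsUnit (σ i).det := (hσ i).det_pos.ne'.isUnit
  have hinv1 : σ i * (σ i)⁻¹ = 1 := Matrix.mul_nonsing_inv _ hdet
  have hinv2 : (σ i)⁻¹ * σ i = 1 := Matrix.nonsing_inv_mul _ hdet
  have hinvherm : ((σ i)⁻¹)ᴴ = (σ i)⁻¹ := by
    rw [Matrix.conjTranspose_nonsing_inv, (hherm i).eq]
  have hd0 : (d i : ℂ) ≠ 0 := Nat.cast_ne_zero.mpr (hd i).ne'
  set T : ∀ j, Matrix (Fin (d j)) (Fin (d j)) ℂ :=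
    ∑ p : κ, b p * Pi.single i m * star (b p) with hTdef
  -- each term is supported in block `i`
  have hterm : ∀ u : ∀ j, Matrix (Fin (d j)) (Fin (d j)) ℂ,
      u * Pi.single i m * star u = Pi.single i (u i * m * (u i)ᴴ) := by
    intro u
    rw [Stmt6Aux.mul_single, Stmt6Aux.single_mul]
    rfl
  -- auxiliary families realizing the test functional as a sum of rank-one terms
  set y : Fin (d i) × Fin (d i) → ∀ j, Matrix (Fin (d j)) (Fin (d j)) ℂ :=
    fun kl => ((d i : ℂ)⁻¹) •
      (Pi.single i (Matrix.single kl.1 kl.2 (1 : ℂ) * (σ i)⁻¹) :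
        ∀ j, Matrix (Fin (d j)) (Fin (d j)) ℂ) with hydef
  set z : Fin (d i) × Fin (d i) → ∀ j, Matrix (Fin (d j)) (Fin (d j)) ℂ :=
    fun kl => Pi.single i (Matrix.single kl.1 kl.2 (1 : ℂ) * (m * (σ i)⁻¹)) with hzdef
  set v : ∀ j, Matrix (Fin (d j)) (Fin (d j)) ℂ := Pi.single i ((σ i)⁻¹) with hvdef
  have hstarv : star v = Pi.single i ((σ i)⁻¹) := by
    rw [hvdef, ← Pi.single_star]
    exact congrArg _ hinvherm
  have hstary : ∀ kl : Fin (d i) × Fin (d i), star (y kl) =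
      ((d i : ℂ)⁻¹) •
        (Pi.single i ((σ i)⁻¹ * Matrix.single kl.2 kl.1 (1 : ℂ)) :
          ∀ j, Matrix (Fin (d j)) (Fin (d j)) ℂ) := by
    intro kl
    have h1 : star (Pi.single i (Matrix.single kl.1 kl.2 (1 : ℂ) * (σ i)⁻¹) :
          ∀ j, Matrix (Fin (d j)) (Fin (d j)) ℂ)
        = Pi.single i ((σ i)⁻¹ * Matrix.single kl.2 kl.1 (1 : ℂ)) := by
      rw [← Pi.single_star]
      refine congrArg _ ?_
      rw [Matrix.star_eq_conjTranspose, Matrix.conjTranspose_mul, hinvherm,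
        Stmt6Aux.sbm_conjT]
    simp only [hydef]
    rw [star_smul, h1]
    congr 1
    simp
  have e1 : ∀ (u : ∀ j, Matrix (Fin (d j)) (Fin (d j)) ℂ) (kl : Fin (d i) × Fin (d i)),
      Stmt6Aux.ipL σ (y kl) u = u i kl.1 kl.2 := by
    intro u kl
    rw [Stmt6Aux.ipL_apply, hstary kl, smul_mul_assoc, Stmt6Aux.single_mul,
      Stmt6Aux.delta_smul, Stmt6Aux.delta_single]
    rw [Matrix.mul_assoc ((σ i)⁻¹) (Matrix.single kl.2 kl.1 (1 : ℂ)) (u i)]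
    rw [Matrix.trace_mul_cycle ((σ i)⁻¹) (Matrix.single kl.2 kl.1 (1 : ℂ) * u i) (σ i)]
    rw [hinv1, Matrix.one_mul, Stmt6Aux.trace_sbm_mul]
    rw [← mul_assoc, inv_mul_cancel₀ hd0, one_mul]
  have e2 : ∀ (u : ∀ j, Matrix (Fin (d j)) (Fin (d j)) ℂ) (kl : Fin (d i) × Fin (d i)),
      Stmt6Aux.ipL σ u (z kl) = (d i : ℂ) * (m * (u i)ᴴ) kl.2 kl.1 := by
    intro u kl
    rw [Stmt6Aux.ipL_apply]
    simp only [hzdef]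
    rw [Stmt6Aux.mul_single, Stmt6Aux.delta_single]
    congr 1
    have harr : (star u) i = (u i)ᴴ := rfl
    rw [harr]
    calc ((u i)ᴴ * (Matrix.single kl.1 kl.2 (1 : ℂ) * (m * (σ i)⁻¹)) * σ i).trace
        = ((u i)ᴴ * (Matrix.single kl.1 kl.2 (1 : ℂ) * m) * ((σ i)⁻¹ * σ i)).trace := by
          congr 1
          noncomm_ring
      _ = ((u i)ᴴ * (Matrix.single kl.1 kl.2 (1 : ℂ) * m)).trace := by
          rw [hinv2, Matrix.mul_one]
      _ = (Matrix.single kl.1 kl.2 (1 : ℂ) * (m * (u i)ᴴ)).trace := by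
          rw [Matrix.trace_mul_comm]
          congr 1
          noncomm_ring
      _ = (m * (u i)ᴴ) kl.2 kl.1 := Stmt6Aux.trace_sbm_mul _ _ _
  have hA : ∀ u : ∀ j, Matrix (Fin (d j)) (Fin (d j)) ℂ,
      Stmt6Aux.ipL σ v (u * Pi.single i m * star u)
        = ∑ kl : Fin (d i) × Fin (d i),
            Stmt6Aux.ipL σ (y kl) u * Stmt6Aux.ipL σ u (z kl) := by
    intro u
    simp only [e1, e2]
    rw [hterm u, Stmt6Aux.ipL_apply, hstarv, Stmt6Aux.single_mul, Stmt6Aux.delta_single]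
    simp only [Pi.single_eq_same]
    rw [Matrix.trace_mul_cycle ((σ i)⁻¹) (u i * m * (u i)ᴴ) (σ i), hinv1, Matrix.one_mul]
    calc (d i : ℂ) * (u i * m * (u i)ᴴ).trace
        = ∑ k : Fin (d i), (d i : ℂ) * (u i * (m * (u i)ᴴ)) k k := by
          rw [Matrix.mul_assoc, Matrix.trace, Finset.mul_sum]
          rfl
      _ = ∑ kl : Fin (d i) × Fin (d i),
            u i kl.1 kl.2 * ((d i : ℂ) * (m * (u i)ᴴ) kl.2 kl.1) := by
          rw [Fintype.sum_prod_type]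
          refine Finset.sum_congr rfl fun k _ => ?_
          rw [Matrix.mul_apply, Finset.mul_sum]
          exact Finset.sum_congr rfl fun l _ => by ring
  have hB : ∑ kl : Fin (d i) × Fin (d i), Stmt6Aux.ipL σ (y kl) (z kl)
      = (d i : ℂ) * (m * (σ i)⁻¹).trace := by
    have e3 : ∀ kl : Fin (d i) × Fin (d i),
        Stmt6Aux.ipL σ (y kl) (z kl) = (m * (σ i)⁻¹) kl.2 kl.2 := by
      intro kl
      rw [Stmt6Aux.ipL_apply, hstary kl, smul_mul_assoc]
      simp only [hzdef]
      rw [Stmt6Aux.single_mul, Stmt6Aux.delta_smul, Stmt6Aux.delta_single]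
      simp only [Pi.single_eq_same]
      have hmm : (σ i)⁻¹ * Matrix.single kl.2 kl.1 (1 : ℂ)
            * (Matrix.single kl.1 kl.2 (1 : ℂ) * (m * (σ i)⁻¹)) * σ i
          = (σ i)⁻¹ * (Matrix.single kl.2 kl.2 (1 : ℂ) * m) := by
        have h1 : Matrix.single kl.2 kl.1 (1 : ℂ) * Matrix.single kl.1 kl.2 (1 : ℂ)
            = Matrix.single kl.2 kl.2 (1 : ℂ) := by
          rw [Matrix.single_mul_single_same, one_mul]
        calc (σ i)⁻¹ * Matrix.single kl.2 kl.1 (1 : ℂ)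
              * (Matrix.single kl.1 kl.2 (1 : ℂ) * (m * (σ i)⁻¹)) * σ i
            = (σ i)⁻¹ * ((Matrix.single kl.2 kl.1 (1 : ℂ) * Matrix.single kl.1 kl.2 (1 : ℂ)) * m)
                * ((σ i)⁻¹ * σ i) := by noncomm_ring
          _ = (σ i)⁻¹ * (Matrix.single kl.2 kl.2 (1 : ℂ) * m) := by
              rw [h1, hinv2, Matrix.mul_one]
      rw [hmm, Matrix.trace_mul_comm, Matrix.mul_assoc, Stmt6Aux.trace_sbm_mul]
      rw [← mul_assoc, inv_mul_cancel₀ hd0, one_mul]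
    simp only [e3]
    rw [Fintype.sum_prod_type]
    have htr' : ∀ _k : Fin (d i), ∑ l : Fin (d i), (m * (σ i)⁻¹) l l
        = (m * (σ i)⁻¹).trace := fun _ => rfl
    simp only [htr']
    rw [Finset.sum_const, Finset.card_univ, Fintype.card_fin, nsmul_eq_mul]
    rfl
  -- block support and centrality of T
  have hT' : T = ∑ p : κ,
      (Pi.single i (b p i * m * (b p i)ᴴ) : ∀ j, Matrix (Fin (d j)) (Fin (d j)) ℂ) := by
    rw [hTdef]
    exact Finset.sum_congr rfl fun p _ => hterm (b p)
  have hTj : ∀ j, j ≠ i → T j = 0 := by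
    intro j hj
    rw [hT', Finset.sum_apply]
    exact Finset.sum_eq_zero fun p _ => Pi.single_eq_of_ne hj _
  have hcomm : ∀ a : ∀ j, Matrix (Fin (d j)) (Fin (d j)) ℂ, a * T = T * a := by
    intro a
    rw [hTdef, Finset.mul_sum, Finset.sum_mul]
    exact Stmt6Aux.swap σ hherm hb_on hb_span a (Pi.single i m)
  have hpair : Pairwise fun k l : Fin (d i) => Commute (Matrix.single k l (1 : ℂ)) (T i) := by
    intro k l _
    have h := congrFun (hcomm (Pi.single i (Matrix.single k l (1 : ℂ)))) i
    exact (by simpa [Pi.mul_apply] using h : Matrix.single k l (1 : ℂ) * T i = T i * Matrix.single k l 1)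
  obtain ⟨c, hc⟩ := Matrix.mem_range_scalar_of_commute_single hpair
  have hTi : T i = c • (1 : Matrix (Fin (d i)) (Fin (d i)) ℂ) := by
    rw [← hc, Matrix.scalar_apply, ← Matrix.smul_one_eq_diagonal]
  have hT2 : T = (Pi.single i (c • (1 : Matrix (Fin (d i)) (Fin (d i)) ℂ)) :
      ∀ j, Matrix (Fin (d j)) (Fin (d j)) ℂ) := by
    funext j
    rcases eq_or_ne j i with rfl | h
    · rw [Pi.single_eq_same]; exact hTi
    · rw [Pi.single_eq_of_ne h]; exact hTj j h
  -- evaluate the test functional against `v` in two ways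
  have EA : Stmt6Aux.ipL σ v T = (d i : ℂ) * (m * (σ i)⁻¹).trace := by
    rw [hTdef, map_sum]
    simp only [hA]
    rw [Finset.sum_comm]
    simp only [Stmt6Aux.parseval σ hb_on hb_span]
    exact hB
  have EC : Stmt6Aux.ipL σ v T = (d i : ℂ) * (c * (d i : ℂ)) := by
    rw [hT2, Stmt6Aux.ipL_apply, hstarv, Stmt6Aux.single_mul, Stmt6Aux.delta_single,
      Pi.single_eq_same]
    rw [Matrix.mul_smul, Matrix.mul_one, Matrix.smul_mul, hinv2, Matrix.trace_smul,
      Matrix.trace_one]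
    simp [Fintype.card_fin, smul_eq_mul]
  have hc2 : c = (m * (σ i)⁻¹).trace / (d i : ℂ) := by
    have h : (d i : ℂ) * (c * (d i : ℂ)) = (d i : ℂ) * (m * (σ i)⁻¹).trace :=
      EC.symm.trans EA
    rw [eq_div_iff hd0]
    exact mul_left_cancel₀ hd0 h
  rw [hT2, hc2]
  exact Pi.single_smul i _ _
end
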